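/- A distribution Ω models an observation function Obs if and only if there exists no counter-example to Ω ⊨ Obs, i.e., no pair (σ_N, P) where Obs(σ_N)=−, P assigns to each Σ_i ∈ Ω a trace σ_{Σ_i} ∈ Dom(Obs) with Obs(σ_{Σ_i})=+ and proj(σ_N, Σ_i) = proj(σ_{Σ_i}, Σ_i). -/

import Mathlib

open Classical in
/-- Projection of a trace onto a sub-alphabet. -/
noncomputable def proj {A : Type*} (s : Set A) : List A → List A
  | [] => []
  | a :: σ => if a ∈ s then a :: proj s σ else proj s σ

/-- A distribution of the alphabet `A`: a family of sub-alphabets covering `A`. -/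
def AlphabetDistribution {A : Type*} (Ω : Set (Set A)) : Prop := ⋃₀ Ω = Set.univ

/-- A language agrees with an observation function (`L ⊨ Obs`). -/
def Agrees {A : Type*} (L : Set (List A)) (Obs : List A → Option Bool) : Prop :=
  ∀ σ b, Obs σ = some b → (σ ∈ L ↔ b = true)

/-- `L` is a product language over the distribution `Ω`: it is the parallel
composition of a family of languages over the component alphabets. -/
def ProductLang {A : Type*} (Ω : Set (Set A)) (L : Set (List A)) : Prop :=
  ∃ Ls : Set A → Set (List A),
    (∀ s ∈ Ω, ∀ σ ∈ Ls s, ∀ a ∈ σ, a ∈ s) ∧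
    L = {σ | ∀ s ∈ Ω, proj s σ ∈ Ls s}

/-- `Ω ⊨ Obs`: some product language over `Ω` agrees with `Obs`. -/
def Models {A : Type*} (Ω : Set (Set A)) (Obs : List A → Option Bool) : Prop :=
  ∃ L, ProductLang Ω L ∧ Agrees L Obs

/-- A counter-example to `Ω ⊨ Obs`: a negative observation `σN` together with,
for each component alphabet, a positive observation with matching projection. -/
def IsCED {A : Type*} (Ω : Set (Set A)) (Obs : List A → Option Bool)
    (σN : List A) (P : Set A → List A) : Prop :=
  Obs σN = some false ∧
  ∀ s ∈ Ω, Obs (P s) = some true ∧ proj s σN = proj s (P s)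

/-- The connectivity preorder: `Ω` is less connecting than `Ω'`. -/
def lessConn {A : Type*} (Ω Ω' : Set (Set A)) : Prop :=
  ∀ s ∈ Ω, ∃ t ∈ Ω', s ⊆ t


lemma mem_proj_mem {A : Type*} (s : Set A) (σ : List A) (a : A)
    (h : a ∈ proj s σ) : a ∈ s := by
  induction σ with
  | nil => simp [proj] at h
  | cons b σ ih =>
    by_cases hb : b ∈ s
    · simp only [proj, if_pos hb, List.mem_cons] at h
      rcases h with rfl | h
      · exact hb
      · exact ih h
    · simp only [proj, if_neg hb] at h
      exact ih h

/-- `Ω ⊨ Obs` iff there is no counter-example to the distribution. -/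
theorem models_iff_no_ced {A : Type*} (Ω : Set (Set A)) (hΩ : AlphabetDistribution Ω)
    (Obs : List A → Option Bool) (hfin : {σ | Obs σ ≠ none}.Finite) :
    Models Ω Obs ↔ ¬ ∃ (σN : List A) (P : Set A → List A), IsCED Ω Obs σN P := by
  constructor
  · rintro ⟨L, ⟨Ls, hsub, rfl⟩, hAg⟩ ⟨σN, P, hneg, hP⟩
    have hσN : σN ∉ {σ | ∀ s ∈ Ω, proj s σ ∈ Ls s} := by
      intro hmem
      have := (hAg σN false hneg).mp hmem
      simp at this
    apply hσN
    intro s hs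
    have hPs : P s ∈ {σ | ∀ t ∈ Ω, proj t σ ∈ Ls t} :=
      (hAg (P s) true (hP s hs).1).mpr rfl
    have := hPs s hs
    rw [(hP s hs).2]
    exact this
  · intro hno
    refine ⟨{σ | ∀ s ∈ Ω, proj s σ ∈ {τ | ∃ σ', Obs σ' = some true ∧ τ = proj s σ'}},
      ⟨fun s => {τ | ∃ σ', Obs σ' = some true ∧ τ = proj s σ'}, ?_, rfl⟩, ?_⟩
    · rintro s _ τ ⟨σ', _, rfl⟩ a ha
      exact mem_proj_mem s σ' a ha
    · classical
      intro σ b hb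
      cases b with
      | true =>
        simp only [iff_true]
        exact fun s _ => ⟨σ, hb, rfl⟩
      | false =>
        simp only [Bool.false_eq_true, iff_false]
        intro hmem
        apply hno
        refine ⟨σ, fun s => if hs : s ∈ Ω then Classical.choose (hmem s hs) else [], hb, ?_⟩
        intro s hs
        simp only [dif_pos hs]
        obtain ⟨h1, h2⟩ := Classical.choose_spec (hmem s hs)
        exact ⟨h1, h2⟩
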